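/- Let q be a prime power and let A and B be finite nonzero F_q-subspaces of the algebraic closure of F_q with |A| = |B| = q^d, such that A^{-1} (the set of inverses of nonzero elements of A) is not contained in B. Then |A^{-1} ∩ B| ≤ 2·q^{d-1} − 2. -/

import Mathlib

open Polynomial Finset


namespace CsajbokAux

variable {F K : Type*} [Field F] [Fintype F] [Field K] [Algebra F K]

/-- `q`-linearized sum `∑_{i ≤ m} a i * x^(q^i)`. -/
def lsum (q : ℕ) (a : ℕ → K) (m : ℕ) (x : K) : K :=
  ∑ i ∈ Finset.range (m + 1), a i * x ^ q ^ i

lemma lsum_zero (q : ℕ) (a : ℕ → K) (m : ℕ) (hq : 1 ≤ q) : lsum q a m 0 = 0 := by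
  unfold lsum
  refine Finset.sum_eq_zero fun i _ => ?_
  rw [zero_pow (by positivity), mul_zero]

lemma pow_qpow_add (q : ℕ) (hfrob : ∀ x y : K, (x + y) ^ q = x ^ q + y ^ q)
    (i : ℕ) (x y : K) : (x + y) ^ q ^ i = x ^ q ^ i + y ^ q ^ i := by
  induction i with
  | zero => simp
  | succ n ih => rw [pow_succ, pow_mul, pow_mul, pow_mul, ih, hfrob]

lemma pow_qpow_scal (q : ℕ)
    (hscal : ∀ μ : F, (algebraMap F K μ) ^ q = algebraMap F K μ)
    (i : ℕ) (μ : F) : (algebraMap F K μ) ^ q ^ i = algebraMap F K μ := by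
  induction i with
  | zero => simp
  | succ n ih => rw [pow_succ, pow_mul, ih, hscal]

lemma sum_pow_q (q : ℕ) (hq : 1 ≤ q) (hfrob : ∀ x y : K, (x + y) ^ q = x ^ q + y ^ q)
    {ι : Type*} (s : Finset ι) (h : ι → K) : (∑ i ∈ s, h i) ^ q = ∑ i ∈ s, h i ^ q := by
  induction s using Finset.cons_induction with
  | empty => simp [zero_pow (by omega : q ≠ 0)]
  | cons a s ha ih => rw [Finset.sum_cons, Finset.sum_cons, hfrob, ih]

lemma lsum_add (q : ℕ) (hfrob : ∀ x y : K, (x + y) ^ q = x ^ q + y ^ q)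
    (a : ℕ → K) (m : ℕ) (x y : K) :
    lsum q a m (x + y) = lsum q a m x + lsum q a m y := by
  unfold lsum
  rw [← Finset.sum_add_distrib]
  refine Finset.sum_congr rfl fun i _ => ?_
  rw [pow_qpow_add q hfrob, mul_add]

lemma lsum_smul (q : ℕ)
    (hscal : ∀ μ : F, (algebraMap F K μ) ^ q = algebraMap F K μ)
    (a : ℕ → K) (m : ℕ) (μ : F) (x : K) :
    lsum q a m (μ • x) = μ • lsum q a m x := by
  unfold lsum
  rw [Finset.smul_sum]
  refine Finset.sum_congr rfl fun i _ => ?_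
  rw [Algebra.smul_def, Algebra.smul_def, mul_pow, pow_qpow_scal q hscal]
  ring

/-- Existence of linearized coefficients vanishing on a span. -/
lemma exists_coeffs (q : ℕ) (hq : 1 ≤ q)
    (hfrob : ∀ x y : K, (x + y) ^ q = x ^ q + y ^ q)
    (hscal : ∀ μ : F, (algebraMap F K μ) ^ q = algebraMap F K μ) :
    ∀ (n : ℕ) (f : Fin n → K), ∃ a : ℕ → K, a n = 1 ∧ (∀ i, n < i → a i = 0) ∧
      ∀ x ∈ Submodule.span F (Set.range f), lsum q a n x = 0 := by
  intro n
  induction n with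
  | zero =>
    intro f
    refine ⟨fun i => if i = 0 then 1 else 0, by simp, fun i hi => if_neg (by omega), ?_⟩
    · intro x hx
      have : Set.range f = ∅ := Set.range_eq_empty f
      rw [this, Submodule.span_empty, Submodule.mem_bot] at hx
      subst hx
      exact lsum_zero q _ 0 hq
  | succ n ih =>
    intro f
    obtain ⟨a, han, hagt, hvan⟩ := ih (f ∘ Fin.castSucc)
    set v := f (Fin.last n) with hv
    set c := lsum q a n v with hc
    refine ⟨fun i => (if i = 0 then 0 else (a (i - 1)) ^ q) - c ^ (q - 1) * a i, ?_, ?_, ?_⟩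
    · simp only [Nat.succ_ne_zero, if_neg, Nat.add_sub_cancel, han, hagt (n+1) (by omega),
        mul_zero, sub_zero, one_pow, ite_false]
    · intro i hi
      have h1 : a (i - 1) = 0 := hagt _ (by omega)
      have h2 : a i = 0 := hagt _ (by omega)
      simp [h1, h2, zero_pow (by omega : q ≠ 0)]
    · -- key formula
      have hkey : ∀ x : K, lsum q (fun i => (if i = 0 then 0 else (a (i - 1)) ^ q) - c ^ (q - 1) * a i) (n + 1) x
          = (lsum q a n x) ^ q - c ^ (q - 1) * lsum q a n x := by
        intro x
        unfold lsum
        have step1 : (∑ i ∈ Finset.range (n + 1 + 1),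
              ((if i = 0 then (0:K) else (a (i - 1)) ^ q) - c ^ (q - 1) * a i) * x ^ q ^ i)
            = (∑ i ∈ Finset.range (n + 1 + 1), (if i = 0 then (0:K) else (a (i - 1)) ^ q) * x ^ q ^ i)
              - c ^ (q - 1) * ∑ i ∈ Finset.range (n + 1 + 1), a i * x ^ q ^ i := by
          rw [Finset.mul_sum, ← Finset.sum_sub_distrib]
          exact Finset.sum_congr rfl fun i _ => by ring
        show (∑ i ∈ Finset.range (n + 1 + 1),
              ((if i = 0 then (0:K) else (a (i - 1)) ^ q) - c ^ (q - 1) * a i) * x ^ q ^ i)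
            = (∑ i ∈ Finset.range (n + 1), a i * x ^ q ^ i) ^ q
              - c ^ (q - 1) * ∑ i ∈ Finset.range (n + 1), a i * x ^ q ^ i
        rw [step1]
        congr 1
        · rw [Finset.sum_range_succ' (fun i => (if i = 0 then (0:K) else (a (i - 1)) ^ q) * x ^ q ^ i)]
          simp only [Nat.succ_ne_zero, ite_false, Nat.add_sub_cancel, ite_true, zero_mul, add_zero]
          rw [sum_pow_q q hq hfrob]
          refine Finset.sum_congr rfl fun i _ => ?_
          rw [mul_pow, ← pow_mul, ← pow_succ]
        · rw [Finset.sum_range_succ (fun i => a i * x ^ q ^ i), hagt (n+1) (by omega)]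
          simp
      -- vanishing on the span
      intro x hx
      have hrange : Set.range f = insert v (Set.range (f ∘ Fin.castSucc)) := by
        ext y
        simp only [Set.mem_insert_iff, Set.mem_range, Function.comp_apply]
        constructor
        · rintro ⟨j, rfl⟩
          induction j using Fin.lastCases with
          | last => left; rw [hv]
          | cast i => right; exact ⟨i, rfl⟩
        · rintro (h | ⟨i, rfl⟩)
          · exact ⟨Fin.last n, by rw [← hv, h]⟩
          · exact ⟨Fin.castSucc i, rfl⟩
      rw [hrange, Submodule.mem_span_insert] at hx
      obtain ⟨μ, w, hw, rfl⟩ := hx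
      have hcv : lsum q a n v = c := rfl
      have h1 : c ^ q - c ^ (q - 1) * c = 0 := by
        rw [← pow_succ, Nat.sub_add_cancel hq, sub_self]
      rw [lsum_add q hfrob, lsum_smul q hscal, hkey v, hkey w, hvan w hw, hcv, h1]
      simp [zero_pow (by omega : q ≠ 0)]




lemma natDegree_esum_le (M : ℕ) (co : ℕ → K) (e : ℕ → ℕ) (N : ℕ) (he : ∀ i < M, e i ≤ N) :
    (∑ i ∈ Finset.range M, C (co i) * X ^ e i).natDegree ≤ N :=
  natDegree_sum_le_of_forall_le _ _ fun i hi =>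
    le_trans (natDegree_C_mul_X_pow_le _ _) (he i (Finset.mem_range.mp hi))

lemma coeff_esum (M : ℕ) (co : ℕ → K) (e : ℕ → ℕ)
    (hinj : ∀ i < M, ∀ j < M, e i = e j → i = j) (j : ℕ) (hj : j < M) :
    (∑ i ∈ Finset.range M, C (co i) * X ^ e i).coeff (e j) = co j := by
  rw [finset_sum_coeff, Finset.sum_eq_single j]
  · simp [coeff_C_mul, coeff_X_pow]
  · intro i hi hne
    rw [coeff_C_mul, coeff_X_pow, if_neg, mul_zero]
    exact fun h => hne (hinj i (Finset.mem_range.mp hi) j hj h.symm)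
  · intro h; exact absurd (Finset.mem_range.mpr hj) h

lemma esum_monic (m : ℕ) (co : ℕ → K) (e : ℕ → ℕ) (hmono : StrictMono e) (h1 : co m = 1) :
    (∑ i ∈ Finset.range (m+1), C (co i) * X ^ e i).Monic ∧
    (∑ i ∈ Finset.range (m+1), C (co i) * X ^ e i).natDegree = e m := by
  have hle : (∑ i ∈ Finset.range (m+1), C (co i) * X ^ e i).natDegree ≤ e m :=
    natDegree_esum_le _ _ _ _ (fun i hi => hmono.monotone (by omega))
  have hcoeff : (∑ i ∈ Finset.range (m+1), C (co i) * X ^ e i).coeff (e m) = co m :=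
    coeff_esum _ _ _ (fun i _ j _ h => hmono.injective h) m (by omega)
  have hone : (∑ i ∈ Finset.range (m+1), C (co i) * X ^ e i).coeff (e m) = 1 := by
    rw [hcoeff, h1]
  refine ⟨monic_of_natDegree_le_of_coeff_eq_one _ hle hone, le_antisymm hle ?_⟩
  exact le_natDegree_of_ne_zero (by rw [hone]; exact one_ne_zero)



/-- Subspace polynomial coefficients: a monic `q`-linearized polynomial whose root set is
exactly the subspace `A`. -/
lemma exists_subspace_coeffs (q : ℕ) (hq2 : 2 ≤ q) (hqcard : Fintype.card F = q)
    (hfrob : ∀ x y : K, (x + y) ^ q = x ^ q + y ^ q)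
    (hscal : ∀ μ : F, (algebraMap F K μ) ^ q = algebraMap F K μ)
    (A : Submodule F K) (d : ℕ) (hA : Nat.card A = q ^ d) :
    ∃ a : ℕ → K, a d = 1 ∧
      ∀ x : K, (x ∈ A ↔ ∑ i ∈ Finset.range (d + 1), a i * x ^ q ^ i = 0) := by
  classical
  have hq1 : 1 ≤ q := by omega
  haveI : Finite ↥A := Nat.finite_of_card_ne_zero (by rw [hA]; positivity)
  haveI : Fintype ↥A := Fintype.ofFinite _
  have hcardF : Fintype.card ↥A = q ^ (Module.finrank F ↥A) := by
    rw [Module.card_eq_pow_finrank (K := F) (V := ↥A), hqcard]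
  have hd : d = Module.finrank F ↥A := by
    have h2 : q ^ d = q ^ (Module.finrank F ↥A) := by
      rw [← hA, Nat.card_eq_fintype_card, hcardF]
    exact Nat.pow_right_injective hq2 h2
  set n := Module.finrank F ↥A with hn
  set b := Module.finBasis F ↥A with hb
  set f : Fin n → K := fun i => (b i : K) with hf
  have hspan : Submodule.span F (Set.range f) = A := by
    have h1 : Set.range f = A.subtype '' (Set.range b) := by
      rw [hf]; ext y; simp [Set.range_comp]; exact Iff.rfl
    rw [h1, ← Submodule.map_span, b.span_eq, Submodule.map_subtype_top]
  obtain ⟨a, han, -, hvan⟩ := exists_coeffs q hq1 hfrob hscal n f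
  subst hd
  refine ⟨a, han, fun x => ?_⟩
  constructor
  · intro hx
    have := hvan x (by rw [hspan]; exact hx)
    unfold lsum at this
    exact this
  · -- root counting
    intro hx
    set fA : K[X] := ∑ i ∈ Finset.range (n + 1), C (a i) * X ^ q ^ i with hfA
    have hmono : StrictMono (fun i => q ^ i) := fun i j hij => Nat.pow_lt_pow_right hq2 hij
    obtain ⟨hmonic, hdeg⟩ := esum_monic n a (fun i => q ^ i) hmono han
    have hne : fA ≠ 0 := hmonic.ne_zero
    have heval : ∀ y : K, fA.eval y = ∑ i ∈ Finset.range (n + 1), a i * y ^ q ^ i := by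
      intro y
      rw [hfA, eval_finset_sum]
      exact Finset.sum_congr rfl fun i _ => by simp
    -- the finset of elements of A
    have hAfin : (A : Set K).Finite := Set.toFinite _
    set sA : Finset K := hAfin.toFinset with hsA
    have hcard_sA : sA.card = q ^ n := by
      rw [hsA, ← Set.ncard_eq_toFinset_card (A : Set K) hAfin, ← Nat.card_coe_set_eq]
      exact hA
    have hsub : sA ⊆ fA.roots.toFinset := by
      intro y hy
      rw [Set.Finite.mem_toFinset] at hy
      rw [Multiset.mem_toFinset, mem_roots hne]
      have := hvan y (by rw [hspan]; exact hy)
      unfold lsum at this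
      rw [IsRoot.def, heval]
      exact this
    have hchain : fA.roots.toFinset.card ≤ q ^ n := by
      calc fA.roots.toFinset.card ≤ Multiset.card fA.roots := Multiset.toFinset_card_le _
        _ ≤ fA.natDegree := fA.card_roots'
        _ = q ^ n := hdeg
    have hEq : fA.roots.toFinset = sA :=
      (Finset.eq_of_subset_of_card_le hsub (by rw [hcard_sA]; exact hchain)).symm
    have hxroot : x ∈ fA.roots.toFinset := by
      rw [Multiset.mem_toFinset, mem_roots hne, IsRoot.def, heval]
      exact hx
    rw [hEq, Set.Finite.mem_toFinset] at hxroot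
    exact hxroot

end CsajbokAux

open CsajbokAux

/-- Csajbók's bound: if `A` and `B` are `F_q`-subspaces of the algebraic closure of `F_q`
of the same size `q^d` and `A⁻¹ ⊄ B`, then `|A⁻¹ ∩ B| ≤ 2q^{d-1} - 2`. -/
theorem stmt0 (F : Type*) [Field F] [Fintype F]
    (K : Type*) [Field K] [Algebra F K] [IsAlgClosure F K]
    (q d : ℕ) (hq : Fintype.card F = q) (hd : 1 ≤ d)
    (A B : Submodule F K)
    (hA : Nat.card A = q ^ d) (hB : Nat.card B = q ^ d)
    (hAB : ¬ ((fun x => x⁻¹) '' ((A : Set K) \ {0}) ⊆ (B : Set K))) :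
    Nat.card ((fun x => x⁻¹) '' ((A : Set K) \ {0}) ∩ (B : Set K) : Set K)
      ≤ 2 * q ^ (d - 1) - 2 := by
  classical
  have hq2 : 2 ≤ q := by rw [← hq]; exact Fintype.one_lt_card
  obtain ⟨r, hr⟩ : ∃ r, q = r + 1 := ⟨q - 1, by omega⟩
  have hr1 : 1 ≤ r := by omega
  obtain ⟨m, hdm⟩ : ∃ m, d = m + 1 := ⟨d - 1, by omega⟩
  -- characteristic facts
  set p := ringChar F with hp
  haveI hFp : CharP F p := ringChar.charP F
  obtain ⟨e, hpp, hcard⟩ := FiniteField.card F p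
  haveI hpfact : Fact p.Prime := ⟨hpp⟩
  haveI hKp : CharP K p := charP_of_injective_algebraMap (algebraMap F K).injective p
  have hqpe : q = p ^ (e : ℕ) := by rw [← hq, hcard]
  have hfrob : ∀ x y : K, (x + y) ^ q = x ^ q + y ^ q := by
    intro x y; rw [hqpe]; exact add_pow_char_pow x y p e
  have hscal : ∀ μ : F, (algebraMap F K μ) ^ q = algebraMap F K μ := by
    intro μ; rw [← map_pow, ← hq, FiniteField.pow_card]
  have hqone : ∀ t : K, t ^ q = 1 → t = 1 := by
    intro t ht
    have h1 : (t - 1) ^ q = 0 := by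
      rw [hqpe, sub_pow_char_pow, ← hqpe, ht, one_pow, sub_self]
    have h2 := (pow_eq_zero_iff (by omega : q ≠ 0)).mp h1
    exact sub_eq_zero.mp h2
  -- subspace polynomial coefficients
  obtain ⟨a, had, hAiff⟩ := exists_subspace_coeffs q hq2 hq hfrob hscal A d hA
  obtain ⟨b, hbd, hBiff⟩ := exists_subspace_coeffs q hq2 hq hfrob hscal B d hB
  -- arithmetic gadgets
  set qT : ℕ → ℕ := fun i => ∑ j ∈ Finset.range i, q ^ j with hqT
  set qU : ℕ → ℕ := fun i => ∑ j ∈ Finset.Ico i m, q ^ j with hqU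
  set D : ℕ := qT m with hD
  have hT1 : ∀ i, r * qT i + 1 = q ^ i := by
    intro i
    induction i with
    | zero => simp [hqT]
    | succ n ih =>
      have hstep : qT (n + 1) = qT n + q ^ n := Finset.sum_range_succ _ n
      calc r * qT (n + 1) + 1 = (r * qT n + 1) + r * q ^ n := by rw [hstep]; ring
        _ = q ^ n + r * q ^ n := by rw [ih]
        _ = q ^ n * (r + 1) := by ring
        _ = q ^ (n + 1) := by rw [← hr, pow_succ]
  have hTmono : StrictMono qT := by
    apply strictMono_nat_of_lt_succ
    intro n
    have hstep : qT (n + 1) = qT n + q ^ n := Finset.sum_range_succ _ n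
    have hpos : 1 ≤ q ^ n := Nat.one_le_pow n q (by omega)
    omega
  have hTinj : ∀ i < m + 1, ∀ j < m + 1, qT i = qT j → i = j :=
    fun i _ j _ h => hTmono.injective h
  have hTU : ∀ i, i ≤ m → qT i + qU i = qT m := by
    intro i hi
    rw [hqT, hqU]
    simp only [Finset.range_eq_Ico]
    exact Finset.sum_Ico_consecutive _ (Nat.zero_le i) hi
  have hU1 : ∀ i, i ≤ m → r * qU i + q ^ i = q ^ m := by
    intro i hi
    calc r * qU i + q ^ i = r * qU i + (r * qT i + 1) := by rw [hT1 i]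
      _ = r * (qT i + qU i) + 1 := by ring
      _ = r * qT m + 1 := by rw [hTU i hi]
      _ = q ^ m := hT1 m
  have hUdec : ∀ i j, i < j → j ≤ m → qU j < qU i := by
    intro i j hij hjm
    have h1 : qU i = (∑ k ∈ Finset.Ico i j, q ^ k) + qU j := by
      rw [hqU]
      exact (Finset.sum_Ico_consecutive _ (le_of_lt hij) hjm).symm
    have h2 : q ^ i ≤ ∑ k ∈ Finset.Ico i j, q ^ k :=
      Finset.single_le_sum (fun k _ => Nat.zero_le _) (Finset.mem_Ico.mpr ⟨le_refl i, hij⟩)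
    have h3 : 1 ≤ q ^ i := Nat.one_le_pow i q (by omega)
    omega
  have hUinj : ∀ i < m + 1, ∀ j < m + 1, qU i = qU j → i = j := by
    intro i hi j hj hij
    by_contra hne
    rcases Nat.lt_or_ge i j with h | h
    · have := hUdec i j h (by omega); omega
    · have : j < i := by omega
      have := hUdec j i this (by omega); omega
  have hUm : qU m = 0 := by rw [hqU]; simp
  have hUleD : ∀ i, i < m + 1 → qU i ≤ D := by
    intro i hi
    have := hTU i (by omega)
    omega
  -- the polynomials
  set P : K[X] := ∑ i ∈ Finset.range (m + 1), C (a (i + 1)) * X ^ qT i with hP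
  set Q : K[X] := ∑ i ∈ Finset.range (m + 1), C (b (i + 1)) * X ^ qU i with hQ
  set Om : K[X] := P * Q - C (a 0 * b 0) * X ^ D with hOm
  -- every u in A \ {0} with u⁻¹ ∈ B gives a root u^(q*r) of Om
  have hroot : ∀ u : K, u ∈ A → u ≠ 0 → u⁻¹ ∈ B → Om.eval (u ^ (q * r)) = 0 := by
    intro u huA hu0 huB
    set z : K := u ^ (q * r) with hz
    have eqA : ∑ i ∈ Finset.range (d + 1), a i * u ^ q ^ i = 0 := (hAiff u).mp huA
    have eqB : ∑ i ∈ Finset.range (d + 1), b i * (u⁻¹) ^ q ^ i = 0 := (hBiff u⁻¹).mp huB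
    have hexp1 : ∀ i, u ^ q ^ (i + 1) = u * (u ^ r * z ^ qT i) := by
      intro i
      have hE : q ^ (i + 1) = 1 + r + (q * r) * qT i := by
        calc q ^ (i + 1) = q ^ i * q := pow_succ q i
          _ = (r * qT i + 1) * q := by rw [hT1 i]
          _ = 1 + r + (q * r) * qT i := by rw [hr]; ring
      have hzp : z ^ qT i = u ^ ((q * r) * qT i) := by rw [hz, ← pow_mul]
      rw [hE, hzp, pow_add, pow_add, pow_one]
      ring
    have hPeval : P.eval z = ∑ i ∈ Finset.range (m + 1), a (i + 1) * z ^ qT i := by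
      rw [hP, eval_finset_sum]
      exact Finset.sum_congr rfl fun i _ => by simp
    have hQeval : Q.eval z = ∑ i ∈ Finset.range (m + 1), b (i + 1) * z ^ qU i := by
      rw [hQ, eval_finset_sum]
      exact Finset.sum_congr rfl fun i _ => by simp
    -- equation (1)
    have key1 : a 0 + u ^ r * P.eval z = 0 := by
      rw [hdm] at eqA
      rw [Finset.sum_range_succ'] at eqA
      have hsum : ∑ i ∈ Finset.range (m + 1), a (i + 1) * u ^ q ^ (i + 1)
          = u * (u ^ r * ∑ i ∈ Finset.range (m + 1), a (i + 1) * z ^ qT i) := by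
        rw [Finset.mul_sum, Finset.mul_sum]
        refine Finset.sum_congr rfl fun i _ => ?_
        rw [hexp1 i]; ring
      rw [hsum, pow_zero, pow_one] at eqA
      have heq : u * (a 0 + u ^ r * P.eval z) = 0 := by
        rw [hPeval]; linear_combination eqA
      rcases mul_eq_zero.mp heq with h | h
      · exact absurd h hu0
      · exact h
    -- equation (2)
    have key2 : b 0 * (u ^ r * z ^ D) + Q.eval z = 0 := by
      have h2 : ∑ i ∈ Finset.range (d + 1), b i * (u⁻¹) ^ q ^ i * u ^ q ^ d = 0 := by
        rw [← Finset.sum_mul, eqB, zero_mul]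
      rw [hdm] at h2
      rw [Finset.sum_range_succ'] at h2
      have hterm0 : b 0 * (u⁻¹) ^ q ^ 0 * u ^ q ^ (m + 1) = b 0 * (u ^ r * z ^ D) := by
        rw [pow_zero, pow_one, hexp1 m, ← hD]
        field_simp
      have hterms : ∀ i ∈ Finset.range (m + 1),
          b (i + 1) * (u⁻¹) ^ q ^ (i + 1) * u ^ q ^ (m + 1) = b (i + 1) * z ^ qU i := by
        intro i hi
        have him : i ≤ m := by
          have := Finset.mem_range.mp hi; omega
        have hE2 : q ^ (m + 1) = q ^ (i + 1) + (q * r) * qU i := by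
          calc q ^ (m + 1) = q ^ m * q := pow_succ q m
            _ = (r * qU i + q ^ i) * q := by rw [hU1 i him]
            _ = q ^ i * q + (q * r) * qU i := by ring
            _ = q ^ (i + 1) + (q * r) * qU i := by rw [pow_succ]
        have hpow_ne : u ^ q ^ (i + 1) ≠ 0 := pow_ne_zero _ hu0
        have hzp : z ^ qU i = u ^ ((q * r) * qU i) := by rw [hz, ← pow_mul]
        rw [inv_pow, hE2, pow_add, hzp]
        field_simp
        ring
      rw [Finset.sum_congr rfl hterms, hterm0] at h2
      rw [hQeval]
      linear_combination h2
    -- multiply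
    have hOmeval : Om.eval z = P.eval z * Q.eval z - (a 0 * b 0) * z ^ D := by
      rw [hOm]; simp
    rw [hOmeval]
    linear_combination (P.eval z) * key2 - (b 0 * z ^ D) * key1
  -- identify the intersection with the set T
  haveI : Finite ↥A := Nat.finite_of_card_ne_zero (by rw [hA]; positivity)
  set Tset : Set K := {u : K | u ∈ A ∧ u ≠ 0 ∧ u⁻¹ ∈ B} with hTset
  have hTfin : Tset.Finite := Set.Finite.subset (Set.toFinite (A : Set K)) (fun u hu => hu.1)
  set tT : Finset K := hTfin.toFinset with htT
  have hScard : Nat.card ((fun x => x⁻¹) '' ((A : Set K) \ {0}) ∩ (B : Set K) : Set K)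
      = tT.card := by
    have hSeq : ((fun x => x⁻¹) '' ((A : Set K) \ {0}) ∩ (B : Set K)) = (fun x => x⁻¹) '' Tset := by
      ext y
      constructor
      · rintro ⟨⟨x, ⟨hxA, hx0⟩, rfl⟩, hyB⟩
        refine ⟨x, ⟨hxA, by simpa using hx0, hyB⟩, rfl⟩
      · rintro ⟨u, ⟨huA, hu0, huB⟩, rfl⟩
        exact ⟨⟨u, ⟨huA, by simpa using hu0⟩, rfl⟩, huB⟩
    rw [hSeq, Nat.card_coe_set_eq, Set.ncard_image_of_injective _ inv_injective,
      Set.ncard_eq_toFinset_card Tset hTfin]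
  rw [hScard]
  -- case distinction
  rcases eq_or_ne Om 0 with hOm0 | hOmne
  · -- degenerate case : A⁻¹ ⊆ B, contradiction
    exfalso
    have hPQ : P * Q = C (a 0 * b 0) * X ^ D := by
      have := sub_eq_zero.mp (hOm ▸ hOm0 : P * Q - C (a 0 * b 0) * X ^ D = 0)
      exact this
    have ham1 : a (m + 1) = 1 := by rw [← hdm]; exact had
    obtain ⟨hPmonic, hPdeg⟩ := esum_monic m (fun i => a (i + 1)) qT hTmono ham1
    rw [← hP] at hPmonic hPdeg
    have hQ0coeff : Q.coeff 0 = 1 := by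
      have hco := coeff_esum (m + 1) (fun i => b (i + 1)) qU hUinj m (by omega)
      rw [hUm] at hco
      rw [hQ, hco]
      show b (m + 1) = 1
      rw [← hdm]
      exact hbd
    have hQne : Q ≠ 0 := fun h => by rw [h] at hQ0coeff; simp at hQ0coeff
    have hPne : P ≠ 0 := hPmonic.ne_zero
    have hcne : a 0 * b 0 ≠ 0 := by
      intro h
      rw [h, map_zero, zero_mul] at hPQ
      exact (mul_ne_zero hPne hQne) hPQ
    have hdegQ : Q.natDegree = 0 := by
      have h1 : (P * Q).natDegree = D + Q.natDegree := by
        rw [natDegree_mul hPne hQne, hPdeg, hD]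
      have h2 : (C (a 0 * b 0) * X ^ D).natDegree = D := by
        rw [natDegree_C_mul_X_pow D _ hcne]
      rw [hPQ, h2] at h1
      omega
    have hQ1 : Q = 1 := by
      rw [Polynomial.eq_C_of_natDegree_eq_zero hdegQ, hQ0coeff, map_one]
    have hPX : P = C (a 0 * b 0) * X ^ D := by
      rw [← hPQ, hQ1, mul_one]
    have hc1 : a 0 * b 0 = 1 := by
      have hcoeffD : P.coeff D = a 0 * b 0 := by
        rw [hPX, coeff_C_mul, coeff_X_pow, if_pos rfl, mul_one]
      have hcoeffD1 : P.coeff D = 1 := by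
        have := hPmonic
        rw [Polynomial.Monic, Polynomial.leadingCoeff, hPdeg] at this
        exact this
      rw [hcoeffD1] at hcoeffD
      exact hcoeffD.symm
    have hamid : ∀ j, j < m → a (j + 1) = 0 := by
      intro j hj
      have h1 : P.coeff (qT j) = a (j + 1) := by
        rw [hP]; exact coeff_esum (m + 1) (fun i => a (i + 1)) qT hTinj j (by omega)
      have h2 : P.coeff (qT j) = 0 := by
        rw [hPX, coeff_C_mul, coeff_X_pow, if_neg, mul_zero]
        intro h
        have := hTmono hj
        rw [hD] at h
        omega
      rw [h1] at h2
      exact h2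
    have hbmid : ∀ j, j < m → b (j + 1) = 0 := by
      intro j hj
      have h1 : Q.coeff (qU j) = b (j + 1) := by
        rw [hQ]; exact coeff_esum (m + 1) (fun i => b (i + 1)) qU hUinj j (by omega)
      have h2 : Q.coeff (qU j) = 0 := by
        rw [hQ1]
        have hUj : qU j ≠ 0 := by
          have := hUdec j m hj (le_refl m)
          omega
        simp [coeff_one, hUj]
      rw [h1] at h2
      exact h2
    apply hAB
    rintro y ⟨x, hx, rfl⟩
    have hxA : x ∈ A := hx.1
    have hx0 : x ≠ 0 := by
      have := hx.2; simpa using this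
    have eqAx := (hAiff x).mp hxA
    rw [hdm, Finset.sum_range_succ'] at eqAx
    rw [Finset.sum_range_succ] at eqAx
    have hmid0 : ∑ i ∈ Finset.range m, a (i + 1) * x ^ q ^ (i + 1) = 0 :=
      Finset.sum_eq_zero fun i hi => by rw [hamid i (Finset.mem_range.mp hi), zero_mul]
    rw [hmid0, ham1, pow_zero, pow_one, zero_add, one_mul] at eqAx
    have hxq : x ^ q ^ (m + 1) = -(a 0 * x) := by linear_combination eqAx
    have ha0 : a 0 ≠ 0 := fun h => by rw [h, zero_mul] at hc1; exact zero_ne_one hc1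
    have hbx : x⁻¹ ∈ B := by
      refine (hBiff x⁻¹).mpr ?_
      rw [hdm, Finset.sum_range_succ', Finset.sum_range_succ]
      have hmidb : ∑ i ∈ Finset.range m, b (i + 1) * (x⁻¹) ^ q ^ (i + 1) = 0 :=
        Finset.sum_eq_zero fun i hi => by rw [hbmid i (Finset.mem_range.mp hi), zero_mul]
      have hbm1 : b (m + 1) = 1 := by rw [← hdm]; exact hbd
      rw [hmidb, hbm1, pow_zero, pow_one, zero_add, one_mul, inv_pow, hxq]
      have hb0 : b 0 = (a 0)⁻¹ := by
        field_simp
        linear_combination hc1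
      rw [hb0]
      field_simp
      ring
    exact hbx
  · -- main case : counting roots of Om
    set φ : K → K := fun u => u ^ (q * r) with hφ
    have himgsub : tT.image φ ⊆ Om.roots.toFinset := by
      intro w hw
      obtain ⟨u, hu, rfl⟩ := Finset.mem_image.mp hw
      rw [htT, Set.Finite.mem_toFinset] at hu
      rw [Multiset.mem_toFinset, mem_roots hOmne, IsRoot.def]
      exact hroot u hu.1 hu.2.1 hu.2.2
    have hPdegle : P.natDegree ≤ D := by
      rw [hP]
      refine natDegree_esum_le _ _ _ _ (fun i hi => ?_)
      rw [hD]
      exact hTmono.monotone (by omega)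
    have hQdegle : Q.natDegree ≤ D := by
      rw [hQ]
      exact natDegree_esum_le _ _ _ _ (fun i hi => hUleD i hi)
    have himgcard : (tT.image φ).card ≤ 2 * D := by
      calc (tT.image φ).card ≤ Om.roots.toFinset.card := Finset.card_le_card himgsub
        _ ≤ Multiset.card Om.roots := Multiset.toFinset_card_le _
        _ ≤ Om.natDegree := Om.card_roots'
        _ ≤ 2 * D := by
          rw [hOm]
          refine le_trans (natDegree_sub_le _ _) (max_le ?_ ?_)
          · exact le_trans natDegree_mul_le (by omega)
          · exact le_trans (natDegree_C_mul_X_pow_le _ _) (by omega)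
    have hfiber : ∀ w ∈ tT.image φ, (tT.filter fun u => φ u = w).card ≤ r := by
      intro w hw
      obtain ⟨u₀, hu₀, hphi⟩ := Finset.mem_image.mp hw
      have hu₀0 : u₀ ≠ 0 := by
        rw [htT, Set.Finite.mem_toFinset] at hu₀; exact hu₀.2.1
      set R1 : K[X] := X ^ r - C 1 with hR1
      have hR1ne : R1 ≠ 0 := by
        intro h
        have h0 : R1.eval 0 = 0 := by rw [h]; simp
        rw [hR1] at h0
        simp [zero_pow (by omega : r ≠ 0)] at h0
      have hmap : ∀ u ∈ tT.filter (fun u => φ u = w), u * u₀⁻¹ ∈ R1.roots.toFinset := by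
        intro u hu
        rw [Finset.mem_filter] at hu
        obtain ⟨hutT, hphiu⟩ := hu
        have hqr1 : (u * u₀⁻¹) ^ (q * r) = 1 := by
          rw [mul_pow, inv_pow]
          rw [hφ] at hphiu hphi
          simp only at hphiu hphi
          rw [hphiu, hphi]
          exact mul_inv_cancel₀ (by rw [← hphi]; exact pow_ne_zero _ hu₀0)
        have ht1 : (u * u₀⁻¹) ^ r = 1 := by
          apply hqone
          rw [← pow_mul, mul_comm r q]
          exact hqr1
        rw [Multiset.mem_toFinset, mem_roots hR1ne, IsRoot.def, hR1]
        simp [ht1]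
      have hinj2 : Set.InjOn (fun u => u * u₀⁻¹) (tT.filter fun u => φ u = w) := by
        intro u1 _ u2 _ h
        exact mul_right_cancel₀ (inv_ne_zero hu₀0) h
      calc (tT.filter fun u => φ u = w).card ≤ R1.roots.toFinset.card :=
            Finset.card_le_card_of_injOn _ hmap hinj2
        _ ≤ Multiset.card R1.roots := Multiset.toFinset_card_le _
        _ ≤ R1.natDegree := R1.card_roots'
        _ = r := by rw [hR1, natDegree_X_pow_sub_C]
    have hcount : tT.card ≤ r * (tT.image φ).card :=
      Finset.card_le_mul_card_image _ r hfiber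
    have hrD : r * D + 1 = q ^ m := hT1 m
    have hdq : q ^ (d - 1) = q ^ m := by rw [hdm]; simp
    calc tT.card ≤ r * (tT.image φ).card := hcount
      _ ≤ r * (2 * D) := Nat.mul_le_mul_left r himgcard
      _ ≤ 2 * q ^ (d - 1) - 2 := by
        rw [hdq]
        have h2 : r * (2 * D) = 2 * (r * D) := by ring
        omega
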